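/- Let I be an open interval in ℝ and X a subset of I. Then X is a finite union of open intervals and singletons if and only if the intersection of the topological boundary of X with I is finite. -/

import Mathlib

open Set

/-- A set is an open interval of ℝ (possibly unbounded). -/
def IsOpenIntervalR (s : Set ℝ) : Prop :=
  (∃ a b : ℝ, s = Set.Ioo a b) ∨ (∃ a : ℝ, s = Set.Ioi a) ∨
    (∃ b : ℝ, s = Set.Iio b) ∨ s = Set.univ

lemma IsOpenIntervalR.isOpen {s : Set ℝ} (h : IsOpenIntervalR s) : IsOpen s := by
  rcases h with ⟨a, b, rfl⟩ | ⟨a, rfl⟩ | ⟨b, rfl⟩ | rfl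
  exacts [isOpen_Ioo, isOpen_Ioi, isOpen_Iio, isOpen_univ]

lemma IsOpenIntervalR.isPreconnected {s : Set ℝ} (h : IsOpenIntervalR s) :
    IsPreconnected s := by
  rcases h with ⟨a, b, rfl⟩ | ⟨a, rfl⟩ | ⟨b, rfl⟩ | rfl
  exacts [isPreconnected_Ioo, isPreconnected_Ioi, isPreconnected_Iio, isPreconnected_univ]

lemma IsOpenIntervalR.frontier_finite {s : Set ℝ} (h : IsOpenIntervalR s) :
    (frontier s).Finite := by
  rcases h with ⟨a, b, rfl⟩ | ⟨a, rfl⟩ | ⟨b, rfl⟩ | rfl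
  · refine ((Set.finite_singleton b).insert a).subset ?_
    intro x hx
    have h1 : x ∈ Set.Icc a b := closure_minimal Set.Ioo_subset_Icc_self isClosed_Icc hx.1
    have h2 : x ∉ Set.Ioo a b := by
      have := hx.2; rwa [isOpen_Ioo.interior_eq] at this
    simp only [Set.mem_Icc] at h1
    simp only [Set.mem_Ioo, not_and_or, not_lt] at h2
    rcases h2 with h2 | h2
    · left; exact le_antisymm h2 h1.1
    · right; simp [le_antisymm h1.2 h2]
  · refine (Set.finite_singleton a).subset ?_
    intro x hx
    have h1 : x ∈ Set.Ici a := closure_minimal Set.Ioi_subset_Ici_self isClosed_Ici hx.1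
    have h2 : x ∉ Set.Ioi a := by
      have := hx.2; rwa [isOpen_Ioi.interior_eq] at this
    simp only [Set.mem_Ici] at h1
    simp only [Set.mem_Ioi, not_lt] at h2
    simp [le_antisymm h2 h1]
  · refine (Set.finite_singleton b).subset ?_
    intro x hx
    have h1 : x ∈ Set.Iic b := closure_minimal Set.Iio_subset_Iic_self isClosed_Iic hx.1
    have h2 : x ∉ Set.Iio b := by
      have := hx.2; rwa [isOpen_Iio.interior_eq] at this
    simp only [Set.mem_Iic] at h1
    simp only [Set.mem_Iio, not_lt] at h2
    simp [le_antisymm h1 h2]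
  · simp

lemma IsOpenIntervalR.inter_Iio {s : Set ℝ} (h : IsOpenIntervalR s) (x : ℝ) :
    IsOpenIntervalR (s ∩ Set.Iio x) := by
  rcases h with ⟨a, b, rfl⟩ | ⟨a, rfl⟩ | ⟨b, rfl⟩ | rfl
  · exact Or.inl ⟨a, min b x, by ext y; simp [lt_min_iff]; tauto⟩
  · exact Or.inl ⟨a, x, by ext y; simp⟩
  · exact Or.inr (Or.inr (Or.inl ⟨min b x, by ext y; simp [lt_min_iff]⟩))
  · exact Or.inr (Or.inr (Or.inl ⟨x, by simp⟩))

lemma IsOpenIntervalR.inter_Ioi {s : Set ℝ} (h : IsOpenIntervalR s) (x : ℝ) :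
    IsOpenIntervalR (s ∩ Set.Ioi x) := by
  rcases h with ⟨a, b, rfl⟩ | ⟨a, rfl⟩ | ⟨b, rfl⟩ | rfl
  · exact Or.inl ⟨max a x, b, by ext y; simp [max_lt_iff]; tauto⟩
  · exact Or.inr (Or.inl ⟨max a x, by ext y; simp [max_lt_iff]⟩)
  · exact Or.inl ⟨x, b, by ext y; simp; tauto⟩
  · exact Or.inr (Or.inl ⟨x, by simp⟩)

lemma frontier_inter_open' {X U : Set ℝ} (hU : IsOpen U) :
    frontier (X ∩ U) ∩ U = frontier X ∩ U := by
  ext y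
  constructor
  · rintro ⟨hf, hy⟩
    refine ⟨⟨closure_mono Set.inter_subset_left hf.1, ?_⟩, hy⟩
    intro hint
    exact hf.2 (by rw [interior_inter, hU.interior_eq]; exact ⟨hint, hy⟩)
  · rintro ⟨⟨hc, hni⟩, hy⟩
    refine ⟨⟨?_, ?_⟩, hy⟩
    · have h1 : U ∩ closure X ⊆ closure (U ∩ X) := hU.inter_closure
      have := h1 ⟨hy, hc⟩
      rwa [Set.inter_comm U X] at this
    · rw [interior_inter, hU.interior_eq]
      rintro ⟨h1, _⟩
      exact hni h1

/-- Base case: no frontier point inside `I`. -/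
lemma base_case {I X : Set ℝ} (hI : IsOpenIntervalR I) (hXI : X ⊆ I)
    (h : frontier X ∩ I = ∅) :
    ∃ S : Finset (Set ℝ),
      (∀ s ∈ S, IsOpenIntervalR s ∨ ∃ x : ℝ, s = {x}) ∧ X = ⋃₀ (S : Set (Set ℝ)) := by
  have hsub : I ⊆ interior X ∪ interior Xᶜ := by
    intro y hy
    by_contra hc
    simp only [Set.mem_union, not_or] at hc
    have hyf : y ∈ frontier X := by
      constructor
      · rw [closure_eq_compl_interior_compl]
        exact fun hmem => hc.2 hmem
      · exact hc.1
    exact Set.eq_empty_iff_forall_notMem.mp h y ⟨hyf, hy⟩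
  have hdisj : Disjoint (interior X) (interior Xᶜ) :=
    Set.disjoint_of_subset interior_subset interior_subset disjoint_compl_right
  rcases hI.isPreconnected.subset_or_subset isOpen_interior isOpen_interior hdisj hsub with
    h1 | h1
  · refine ⟨{I}, ?_, ?_⟩
    · intro s hs
      simp only [Finset.mem_singleton] at hs
      exact hs ▸ Or.inl hI
    · have : X = I := Set.Subset.antisymm hXI (fun y hy => interior_subset (h1 hy))
      simp [this]
  · refine ⟨∅, by simp, ?_⟩
    have : X = ∅ := by
      rw [Set.eq_empty_iff_forall_notMem]
      intro y hy
      exact interior_subset (h1 (hXI hy)) hy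
    simp [this]

lemma key_induction : ∀ n : ℕ, ∀ I X : Set ℝ, IsOpenIntervalR I → X ⊆ I →
    (frontier X ∩ I).Finite → (frontier X ∩ I).ncard ≤ n →
    ∃ S : Finset (Set ℝ),
      (∀ s ∈ S, IsOpenIntervalR s ∨ ∃ x : ℝ, s = {x}) ∧ X = ⋃₀ (S : Set (Set ℝ)) := by
  intro n
  induction n with
  | zero =>
    intro I X hI hXI hfin hcard
    exact base_case hI hXI ((Set.ncard_eq_zero hfin).mp (Nat.le_zero.mp hcard))
  | succ n ih =>
    intro I X hI hXI hfin hcard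
    classical
    rcases Set.eq_empty_or_nonempty (frontier X ∩ I) with he | ⟨x, hx⟩
    · exact base_case hI hXI he
    · set I₁ := I ∩ Set.Iio x with hI₁def
      set I₂ := I ∩ Set.Ioi x with hI₂def
      have hI₁ : IsOpenIntervalR I₁ := hI.inter_Iio x
      have hI₂ : IsOpenIntervalR I₂ := hI.inter_Ioi x
      have hfr₁ : frontier (X ∩ I₁) ∩ I₁ ⊆ (frontier X ∩ I) \ {x} := by
        rw [frontier_inter_open' hI₁.isOpen]
        rintro y ⟨hf, hy⟩
        exact ⟨⟨hf, hy.1⟩, fun hmem => absurd hy.2 (by simp [Set.mem_singleton_iff.mp hmem])⟩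
      have hfr₂ : frontier (X ∩ I₂) ∩ I₂ ⊆ (frontier X ∩ I) \ {x} := by
        rw [frontier_inter_open' hI₂.isOpen]
        rintro y ⟨hf, hy⟩
        exact ⟨⟨hf, hy.1⟩, fun hmem => absurd hy.2 (by simp [Set.mem_singleton_iff.mp hmem])⟩
      have hdfin : ((frontier X ∩ I) \ {x}).Finite := hfin.diff
      have hdcard : ((frontier X ∩ I) \ {x}).ncard < (frontier X ∩ I).ncard :=
        Set.ncard_diff_singleton_lt_of_mem hx hfin
      have hdcard' : ((frontier X ∩ I) \ {x}).ncard ≤ n := by omega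
      have hfin₁ : (frontier (X ∩ I₁) ∩ I₁).Finite := hdfin.subset hfr₁
      have hfin₂ : (frontier (X ∩ I₂) ∩ I₂).Finite := hdfin.subset hfr₂
      obtain ⟨S₁, hS₁, hX₁⟩ := ih I₁ (X ∩ I₁) hI₁ Set.inter_subset_right hfin₁
        (le_trans (Set.ncard_le_ncard hfr₁ hdfin) hdcard')
      obtain ⟨S₂, hS₂, hX₂⟩ := ih I₂ (X ∩ I₂) hI₂ Set.inter_subset_right hfin₂
        (le_trans (Set.ncard_le_ncard hfr₂ hdfin) hdcard')
      have hXsplit : X = (X ∩ I₁) ∪ (X ∩ I₂) ∪ (X ∩ {x}) := by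
        ext y
        constructor
        · intro hy
          have hyI : y ∈ I := hXI hy
          rcases lt_trichotomy y x with h | h | h
          · exact Or.inl (Or.inl ⟨hy, hyI, h⟩)
          · exact Or.inr ⟨hy, h⟩
          · exact Or.inl (Or.inr ⟨hy, hyI, h⟩)
        · rintro ((⟨hy, _⟩ | ⟨hy, _⟩) | ⟨hy, _⟩) <;> exact hy
      by_cases hxX : x ∈ X
      · refine ⟨S₁ ∪ S₂ ∪ {({x} : Set ℝ)}, ?_, ?_⟩
        · intro s hs
          simp only [Finset.mem_union, Finset.mem_singleton] at hs
          rcases hs with (hs | hs) | hs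
          · exact hS₁ s hs
          · exact hS₂ s hs
          · exact Or.inr ⟨x, hs⟩
        · rw [hXsplit]
          have h3 : X ∩ {x} = {x} :=
            Set.inter_eq_self_of_subset_right (Set.singleton_subset_iff.mpr hxX)
          rw [h3]
          simp only [Finset.coe_union, Finset.coe_singleton, Set.sUnion_union,
            Set.sUnion_singleton]
          rw [← hX₁, ← hX₂]
      · refine ⟨S₁ ∪ S₂, ?_, ?_⟩
        · intro s hs
          simp only [Finset.mem_union] at hs
          rcases hs with hs | hs
          · exact hS₁ s hs
          · exact hS₂ s hs
        · have hempty : X ∩ {x} = ∅ := by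
            rw [Set.inter_singleton_eq_empty]; exact hxX
          rw [hXsplit, hempty, Set.union_empty]
          simp only [Finset.coe_union, Set.sUnion_union]
          rw [← hX₁, ← hX₂]

theorem stmt0 (I X : Set ℝ) (hI : IsOpenIntervalR I) (hXI : X ⊆ I) :
    (∃ S : Finset (Set ℝ),
        (∀ s ∈ S, IsOpenIntervalR s ∨ ∃ x : ℝ, s = {x}) ∧ X = ⋃₀ (S : Set (Set ℝ))) ↔
      (frontier X ∩ I).Finite := by
  constructor
  · rintro ⟨S, hS, rfl⟩
    refine Set.Finite.subset ?_ Set.inter_subset_left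
    clear hXI
    classical
    induction S using Finset.induction_on with
    | empty => simp
    | @insert s T hsT ihT =>
      rw [Finset.coe_insert, Set.sUnion_insert]
      have hfs : (frontier s).Finite := by
        rcases hS s (Finset.mem_insert_self s T) with h | ⟨y, rfl⟩
        · exact h.frontier_finite
        · exact (Set.finite_singleton y).subset
            (frontier_subset_closure.trans (le_of_eq isClosed_singleton.closure_eq))
      have hfT : (frontier (⋃₀ (T : Set (Set ℝ)))).Finite :=
        ihT (fun t ht => hS t (Finset.mem_insert_of_mem ht))
      exact (hfs.union hfT).subset ((frontier_union_subset _ _).trans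
        (Set.union_subset_union Set.inter_subset_left Set.inter_subset_right))
  · intro hfin
    exact key_induction (frontier X ∩ I).ncard I X hI hXI hfin le_rfl
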